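/- Let H be the numerical semigroup generated by 2 and 5 (i.e., H = {0, 2, 4, 5, 6, 7, ...}) and let e = 3. Then e ∉ H, the smallest nonzero element of H is λ₁ = 2, and nevertheless the cardinality of H \ (eH* + H) equals eλ₁ = 6. -/

import Mathlib

/-- A numerical semigroup: a subset of ℕ containing 0, closed under addition,
with finite complement in ℕ. -/
def IsNumericalSemigroup (H : Set ℕ) : Prop :=
  0 ∈ H ∧ (∀ a ∈ H, ∀ b ∈ H, a + b ∈ H) ∧ (Hᶜ : Set ℕ).Finite

lemma mem_H_iff (n : ℕ) : (∃ a b : ℕ, n = 2 * a + 5 * b) ↔ n ≠ 1 ∧ n ≠ 3 := by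
  constructor
  · rintro ⟨a, b, rfl⟩; omega
  · rintro ⟨h1, h3⟩
    by_cases h : n % 2 = 0
    · exact ⟨n / 2, 0, by omega⟩
    · exact ⟨(n - 5) / 2, 1, by omega⟩

/-- For H = ⟨2,5⟩ and e = 3: e ∉ H, the smallest nonzero element of H is λ₁ = 2, and
nevertheless #(H \ (eH* + H)) = eλ₁ = 6. So the converse of "e ∈ H ⟹ #(H \ (eH*+H)) = eλ₁"
fails in general. -/
theorem stmt_7 (H : Set ℕ) (hH : H = {n : ℕ | ∃ a b : ℕ, n = 2 * a + 5 * b}) :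
    3 ∉ H ∧ IsLeast {h | h ∈ H ∧ h ≠ 0} 2 ∧
    (H \ {x | ∃ l ∈ H, l ≠ 0 ∧ ∃ m ∈ H, x = 3 * l + m}).ncard = 6 := by
  subst hH
  refine ⟨?_, ⟨?_, ?_⟩, ?_⟩
  · simp only [Set.mem_setOf_eq, mem_H_iff]; omega
  · simp only [Set.mem_setOf_eq, mem_H_iff]; omega
  · rintro h ⟨hm, hne⟩
    simp only [Set.mem_setOf_eq, mem_H_iff] at hm
    omega
  · have hset : ({n : ℕ | ∃ a b : ℕ, n = 2 * a + 5 * b} \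
        {x | ∃ l ∈ {n : ℕ | ∃ a b : ℕ, n = 2 * a + 5 * b}, l ≠ 0 ∧
          ∃ m ∈ {n : ℕ | ∃ a b : ℕ, n = 2 * a + 5 * b}, x = 3 * l + m}) =
        ↑({0, 2, 4, 5, 7, 9} : Finset ℕ) := by
      ext x
      simp only [Set.mem_diff, Set.mem_setOf_eq, mem_H_iff, Finset.coe_insert,
        Set.mem_insert_iff, Finset.coe_singleton, Set.mem_singleton_iff]
      constructor
      · rintro ⟨⟨h1, h3⟩, hn⟩
        by_contra hx
        push_neg at hx
        apply hn
        refine ⟨2, ⟨by omega, by omega⟩, by omega, x - 6, ⟨by omega, by omega⟩, by omega⟩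
      · rintro hx
        refine ⟨by omega, ?_⟩
        rintro ⟨l, ⟨hl1, hl3⟩, hl0, m, ⟨hm1, hm3⟩, rfl⟩
        omega
    rw [hset, Set.ncard_coe_finset]
    decide
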